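/- Let k ≥ 1, H₁, H₀ ∈ M_k(ℝ), and set H(t) = tH₁ + H₀ for t ∈ ℝ. Let ℓ ∈ ℤ, let a₂₁ ∈ ℝ, σ ∈ ℝᵏ, and suppose H(m) is nonsingular for every integer m ≥ ℓ. If the sequence of vectors b(n) ∈ ℝᵏ (n ≥ ℓ) satisfies H(n+2)b(n+1) = H(n)b(n) − 2a₂₁σ for all n ≥ ℓ, then for every n ≥ ℓ, b(n) = H(n)⁻¹H(ℓ)H(n+1)⁻¹[ H(ℓ+1)b(ℓ) − 2a₂₁(n−ℓ)·H((n+ℓ+1)/2)·H(ℓ)⁻¹σ ], where H((n+ℓ+1)/2) = ((n+ℓ+1)/2)H₁ + H₀. -/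
import Mathlib


open Matrix

noncomputable section

/-- Closed-form solution of the linear update recursion
H(n+2)b(n+1) = H(n)b(n) − 2a₂₁σ. -/
theorem b_closed_form
    (k : ℕ) (hk : 1 ≤ k) (H₁ H₀ : Matrix (Fin k) (Fin k) ℝ) (ℓ : ℤ) (a₂₁ : ℝ)
    (σ : Fin k → ℝ)
    (H : ℝ → Matrix (Fin k) (Fin k) ℝ) (hH : ∀ t : ℝ, H t = t • H₁ + H₀)
    (hns : ∀ m : ℤ, ℓ ≤ m → IsUnit (H (m : ℝ)))
    (b : ℤ → Fin k → ℝ)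
    (hrec : ∀ n : ℤ, ℓ ≤ n →
      (H ((n : ℝ) + 2)) *ᵥ b (n + 1) = (H (n : ℝ)) *ᵥ b n - (2 * a₂₁) • σ) :
    ∀ n : ℤ, ℓ ≤ n →
      b n = ((H (n : ℝ))⁻¹ * H (ℓ : ℝ) * (H ((n : ℝ) + 1))⁻¹) *ᵥ
        ((H ((ℓ : ℝ) + 1)) *ᵥ b ℓ -
          (2 * a₂₁ * ((n : ℝ) - (ℓ : ℝ))) •
            ((H (((n : ℝ) + (ℓ : ℝ) + 1) / 2) * (H (ℓ : ℝ))⁻¹) *ᵥ σ)) := by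
  set A := (H (ℓ : ℝ))⁻¹ with hA
  have hdℓ : IsUnit (H (ℓ : ℝ)).det :=
    (Matrix.isUnit_iff_isUnit_det _).mp (hns ℓ le_rfl)
  have hℓA : H (ℓ : ℝ) * A = 1 := Matrix.mul_nonsing_inv _ hdℓ
  have hAℓ : A * H (ℓ : ℝ) = 1 := Matrix.nonsing_inv_mul _ hdℓ
  -- decomposition of H s relative to H ℓ
  have hdec : ∀ s : ℝ, H s = H (ℓ : ℝ) + (s - (ℓ : ℝ)) • H₁ := by
    intro s
    rw [hH, hH]
    module
  -- commutation: H s * A * H t is symmetric in s and t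
  have comm : ∀ s t : ℝ, H s * A * H t = H t * A * H s := by
    intro s t
    rw [hdec s, hdec t]
    simp only [Matrix.add_mul, Matrix.mul_add, Matrix.smul_mul, Matrix.mul_smul,
      hℓA, hAℓ, Matrix.one_mul, Matrix.mul_one, Matrix.mul_assoc]
    module
  -- key claim by induction
  have key : ∀ m : ℤ, ℓ ≤ m →
      (H ((m : ℝ) + 1) * A * H (m : ℝ)) *ᵥ b m =
        (H ((ℓ : ℝ) + 1)) *ᵥ b ℓ -
          (2 * a₂₁ * ((m : ℝ) - (ℓ : ℝ))) •
            ((H (((m : ℝ) + (ℓ : ℝ) + 1) / 2) * A) *ᵥ σ) := by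
    refine Int.le_induction ?_ ?_
    · rw [Matrix.mul_assoc, hAℓ, Matrix.mul_one]
      simp
    · intro m hm ih
      push_cast
      have h2 : ((m : ℝ) + 1 + 1) = (m : ℝ) + 2 := by ring
      rw [h2, comm, Matrix.mul_assoc, ← Matrix.mulVec_mulVec, ← Matrix.mulVec_mulVec,
        hrec m hm, Matrix.mulVec_sub, Matrix.mulVec_smul]
      simp only [Matrix.mulVec_sub, Matrix.mulVec_smul, Matrix.mulVec_mulVec,
        ← Matrix.mul_assoc]
      rw [ih]
      -- now a vector algebra identity
      have hmat : ((m : ℝ) - (ℓ : ℝ)) • H (((m : ℝ) + (ℓ : ℝ) + 1) / 2)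
          + H ((m : ℝ) + 1)
          = ((m : ℝ) + 1 - (ℓ : ℝ)) • H (((m : ℝ) + 1 + (ℓ : ℝ) + 1) / 2) := by
        rw [hH, hH, hH]
        match_scalars <;> ring
      have hv : ((m : ℝ) - (ℓ : ℝ)) • ((H (((m : ℝ) + (ℓ : ℝ) + 1) / 2) * A) *ᵥ σ)
          + (H ((m : ℝ) + 1) * A) *ᵥ σ
          = ((m : ℝ) + 1 - (ℓ : ℝ)) • ((H (((m : ℝ) + 1 + (ℓ : ℝ) + 1) / 2) * A) *ᵥ σ) := by
        rw [← Matrix.smul_mulVec, ← Matrix.smul_mulVec,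
          ← Matrix.add_mulVec, ← Matrix.smul_mul, ← Matrix.smul_mul,
          ← Matrix.add_mul, hmat]
      rw [sub_sub]
      congr 1
      calc (2 * a₂₁ * ((m : ℝ) - (ℓ : ℝ))) • ((H (((m : ℝ) + (ℓ : ℝ) + 1) / 2) * A) *ᵥ σ)
            + (2 * a₂₁) • ((H ((m : ℝ) + 1) * A) *ᵥ σ)
          = (2 * a₂₁) • (((m : ℝ) - (ℓ : ℝ)) • ((H (((m : ℝ) + (ℓ : ℝ) + 1) / 2) * A) *ᵥ σ)
            + (H ((m : ℝ) + 1) * A) *ᵥ σ) := by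
            rw [smul_add, smul_smul]
        _ = (2 * a₂₁ * ((m : ℝ) + 1 - (ℓ : ℝ))) •
            ((H (((m : ℝ) + 1 + (ℓ : ℝ) + 1) / 2) * A) *ᵥ σ) := by
            rw [hv, smul_smul]
  -- conclude
  intro n hn
  have hdn : IsUnit (H (n : ℝ)).det :=
    (Matrix.isUnit_iff_isUnit_det _).mp (hns n hn)
  have hdn1 : IsUnit (H ((n : ℝ) + 1)).det := by
    have := (Matrix.isUnit_iff_isUnit_det _).mp (hns (n + 1) (by omega))
    push_cast at this
    exact this
  have hone : ((H (n : ℝ))⁻¹ * H (ℓ : ℝ) * (H ((n : ℝ) + 1))⁻¹)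
      * (H ((n : ℝ) + 1) * A * H (n : ℝ)) = 1 := by
    simp only [Matrix.mul_assoc]
    rw [← Matrix.mul_assoc (H ((n : ℝ) + 1))⁻¹ (H ((n : ℝ) + 1)),
      Matrix.nonsing_inv_mul _ hdn1, Matrix.one_mul,
      ← Matrix.mul_assoc (H (ℓ : ℝ)) A, hℓA, Matrix.one_mul,
      Matrix.nonsing_inv_mul _ hdn]
  calc b n = (((H (n : ℝ))⁻¹ * H (ℓ : ℝ) * (H ((n : ℝ) + 1))⁻¹)
        * (H ((n : ℝ) + 1) * A * H (n : ℝ))) *ᵥ b n := by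
        rw [hone, Matrix.one_mulVec]
    _ = ((H (n : ℝ))⁻¹ * H (ℓ : ℝ) * (H ((n : ℝ) + 1))⁻¹) *ᵥ
        ((H ((n : ℝ) + 1) * A * H (n : ℝ)) *ᵥ b n) := by
        rw [Matrix.mulVec_mulVec]
    _ = _ := by rw [key n hn]

end
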